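/- Let (M, d) be a metric space and r a Setoid on M with quotient Q := Quotient r; let g and d∼ be the associated class-infimum function and quotient pseudometric. Then: (a) for all c, c' ∈ Q and all x, y ∈ M with ⟦x⟧ = c and ⟦y⟧ = c', one has 0 ≤ d∼ c c' ≤ g c c' ≤ d x y, and d∼ is a pseudometric on Q (d∼ c c = 0, d∼ is symmetric, and d∼ c c'' ≤ d∼ c c' + d∼ c' c''). (b) If for every class c there exists x₀ with ⟦x₀⟧ = c such that g c c' = sInf {d x₀ y | ⟦y⟧ = c'} for every class c', and moreover g c c' > 0 whenever c ≠ c', then d∼ = g and d∼ is a metric on Q (d∼ c c' = 0 ↔ c = c'). -/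

import Mathlib

/-- The class-infimum function: infimum of distances between representatives. -/
noncomputable def classInf {M : Type*} [MetricSpace M] (r : Setoid M)
    (c c' : Quotient r) : ℝ :=
  sInf {t : ℝ | ∃ x y : M, Quotient.mk r x = c ∧ Quotient.mk r y = c' ∧ t = dist x y}

/-- The quotient pseudometric: infimum over finite chains of class-infimum weights. -/
noncomputable def quotDist {M : Type*} [MetricSpace M] (r : Setoid M)
    (c c' : Quotient r) : ℝ :=
  sInf {t : ℝ | ∃ (n : ℕ) (f : Fin (n + 1) → Quotient r), f 0 = c ∧ f (Fin.last n) = c' ∧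
    t = ∑ i : Fin n, classInf r (f i.castSucc) (f i.succ)}

section Aux

variable {M : Type*} [MetricSpace M] (r : Setoid M)

/-- The chain set used in `quotDist`. -/
def chainSet (c c' : Quotient r) : Set ℝ :=
  {t : ℝ | ∃ (n : ℕ) (f : Fin (n + 1) → Quotient r), f 0 = c ∧ f (Fin.last n) = c' ∧
    t = ∑ i : Fin n, classInf r (f i.castSucc) (f i.succ)}

lemma quotDist_eq (c c' : Quotient r) : quotDist r c c' = sInf (chainSet r c c') := rfl

lemma classInf_nonneg (c c' : Quotient r) : 0 ≤ classInf r c c' := by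
  apply Real.sInf_nonneg
  rintro t ⟨x, y, -, -, rfl⟩
  exact dist_nonneg

lemma classInf_le_dist {c c' : Quotient r} {x y : M}
    (hx : Quotient.mk r x = c) (hy : Quotient.mk r y = c') :
    classInf r c c' ≤ dist x y := by
  apply csInf_le
  · exact ⟨0, by rintro t ⟨a, b, -, -, rfl⟩; exact dist_nonneg⟩
  · exact ⟨x, y, hx, hy, rfl⟩

lemma classInf_comm (c c' : Quotient r) : classInf r c c' = classInf r c' c := by
  unfold classInf
  congr 1
  ext t
  constructor
  · rintro ⟨x, y, hx, hy, rfl⟩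
    exact ⟨y, x, hy, hx, dist_comm x y⟩
  · rintro ⟨x, y, hx, hy, rfl⟩
    exact ⟨y, x, hy, hx, dist_comm x y⟩

lemma classInf_self (c : Quotient r) : classInf r c c = 0 := by
  obtain ⟨x, hx⟩ := Quotient.exists_rep c
  refine le_antisymm ?_ (classInf_nonneg r c c)
  simpa using classInf_le_dist r hx hx

lemma chainSet_nonneg (c c' : Quotient r) : ∀ t ∈ chainSet r c c', 0 ≤ t := by
  rintro t ⟨n, f, -, -, rfl⟩
  exact Finset.sum_nonneg fun i _ => classInf_nonneg r _ _

lemma chainSet_bddBelow (c c' : Quotient r) : BddBelow (chainSet r c c') :=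
  ⟨0, chainSet_nonneg r c c'⟩

lemma classInf_mem_chainSet (c c' : Quotient r) : classInf r c c' ∈ chainSet r c c' := by
  refine ⟨1, ![c, c'], rfl, rfl, ?_⟩
  simp [Fin.sum_univ_one]

lemma chainSet_nonempty (c c' : Quotient r) : (chainSet r c c').Nonempty :=
  ⟨_, classInf_mem_chainSet r c c'⟩

lemma quotDist_nonneg (c c' : Quotient r) : 0 ≤ quotDist r c c' :=
  Real.sInf_nonneg (chainSet_nonneg r c c')

lemma quotDist_le_classInf (c c' : Quotient r) : quotDist r c c' ≤ classInf r c c' :=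
  csInf_le (chainSet_bddBelow r c c') (classInf_mem_chainSet r c c')

lemma quotDist_self (c : Quotient r) : quotDist r c c = 0 := by
  refine le_antisymm ?_ (quotDist_nonneg r c c)
  have : (0 : ℝ) ∈ chainSet r c c := ⟨0, fun _ => c, rfl, rfl, by simp⟩
  exact csInf_le (chainSet_bddBelow r c c) this

lemma mem_chainSet_symm {c c' : Quotient r} {t : ℝ} (ht : t ∈ chainSet r c c') :
    t ∈ chainSet r c' c := by
  obtain ⟨n, f, h0, hl, rfl⟩ := ht
  refine ⟨n, fun i => f i.rev, by simp [Fin.rev_zero, hl], by simp [Fin.rev_last, h0], ?_⟩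
  rw [← Fintype.sum_bijective Fin.rev Fin.rev_bijective _ _ (fun i => rfl)]
  apply Finset.sum_congr rfl
  intro i _
  simp only [Fin.rev_castSucc, Fin.rev_succ]
  exact classInf_comm r _ _

lemma quotDist_comm (c c' : Quotient r) : quotDist r c c' = quotDist r c' c := by
  rw [quotDist_eq, quotDist_eq]
  congr 1
  ext t
  exact ⟨fun h => mem_chainSet_symm r h, fun h => mem_chainSet_symm r h⟩

lemma chainSet_add_mem {c c' c'' : Quotient r} {s1 s2 : ℝ}
    (h1 : s1 ∈ chainSet r c c') (h2 : s2 ∈ chainSet r c' c'') :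
    s1 + s2 ∈ chainSet r c c'' := by
  obtain ⟨n, f, hf0, hfl, rfl⟩ := h1
  obtain ⟨m, g, hg0, hgl, rfl⟩ := h2
  set h : Fin (n + m + 1) → Quotient r := fun i =>
    if hi : i.val ≤ n then f ⟨i.val, by omega⟩ else g ⟨i.val - n, by omega⟩ with hh
  have hjun : ∀ k : ℕ, (hk : k ≤ n + m) → h ⟨k, by omega⟩ =
      if hkn : k ≤ n then f ⟨k, by omega⟩ else g ⟨k - n, by omega⟩ := fun k hk => rfl
  refine ⟨n + m, h, ?_, ?_, ?_⟩
  · show h 0 = c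
    rw [hh]
    simp only
    split
    · rw [← hf0]; congr 1
    · rename_i hcon; exact absurd (by simp) hcon
  · show h (Fin.last (n + m)) = c''
    rw [hh]
    simp only
    split
    · rename_i hcon
      have hm : m = 0 := by simpa [Fin.last] using hcon
      subst hm
      have hc : c' = c'' := by
        rw [← hgl, ← hg0]
        congr 1
      rw [← hc, ← hfl]
      congr 1
    · rw [← hgl]
      congr 1
      apply Fin.ext
      simp [Fin.last]
  · rw [Fin.sum_univ_add (fun i : Fin (n + m) => classInf r (h i.castSucc) (h i.succ))]
    congr 1
    · apply Finset.sum_congr rfl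
      intro i _
      have e1 : h (Fin.castSucc (Fin.castAdd m i)) = f i.castSucc := by
        rw [hh]
        simp only [Fin.coe_castSucc, Fin.coe_castAdd]
        rw [dif_pos (by omega : i.val ≤ n)]
        congr 1
      have e2 : h (Fin.succ (Fin.castAdd m i)) = f i.succ := by
        rw [hh]
        simp only [Fin.val_succ, Fin.coe_castAdd]
        rw [dif_pos (by omega : i.val + 1 ≤ n)]
        congr 1
      rw [e1, e2]
    · apply Finset.sum_congr rfl
      intro i _
      have e1 : h (Fin.castSucc (Fin.natAdd n i)) = g i.castSucc := by
        rw [hh]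
        simp only [Fin.coe_castSucc, Fin.coe_natAdd]
        by_cases hi0 : i.val = 0
        · rw [dif_pos (by omega : n + i.val ≤ n)]
          have hmid : f ⟨n + i.val, by omega⟩ = c' := by
            rw [← hfl]; congr 1; exact Fin.ext (by simp [Fin.last]; omega)
          rw [hmid, ← hg0]
          congr 1
          exact Fin.ext (by simp [hi0])
        · rw [dif_neg (by omega : ¬ n + i.val ≤ n)]
          congr 1
          apply Fin.ext
          simp
          try omega
      have e2 : h (Fin.succ (Fin.natAdd n i)) = g i.succ := by
        rw [hh]
        simp only [Fin.val_succ, Fin.coe_natAdd]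
        rw [dif_neg (by omega : ¬ n + i.val + 1 ≤ n)]
        congr 1
        apply Fin.ext
        simp
        try omega
      rw [e1, e2]

lemma quotDist_triangle (c c' c'' : Quotient r) :
    quotDist r c c'' ≤ quotDist r c c' + quotDist r c' c'' := by
  rw [quotDist_eq r c c', quotDist_eq r c' c'']
  rw [← sub_le_iff_le_add']
  apply le_csInf (chainSet_nonempty r c' c'')
  intro t2 ht2
  rw [sub_le_iff_le_add', ← sub_le_iff_le_add]
  apply le_csInf (chainSet_nonempty r c c')
  intro t1 ht1
  rw [sub_le_iff_le_add, quotDist_eq]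
  have := csInf_le (chainSet_bddBelow r c c'') (chainSet_add_mem r ht1 ht2)
  linarith

lemma classInf_triangle
    (H : ∀ c : Quotient r, ∃ x₀ : M, Quotient.mk r x₀ = c ∧
        ∀ c' : Quotient r,
          classInf r c c' = sInf {t : ℝ | ∃ y : M, Quotient.mk r y = c' ∧ t = dist x₀ y})
    (c c' c'' : Quotient r) :
    classInf r c c'' ≤ classInf r c c' + classInf r c' c'' := by
  obtain ⟨x₀, hx₀, hx₀'⟩ := H c'
  apply le_of_forall_pos_le_add
  intro ε hε
  have hbdd : ∀ (d : Quotient r), BddBelow {t : ℝ | ∃ y : M, Quotient.mk r y = d ∧ t = dist x₀ y} :=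
    fun d => ⟨0, by rintro t ⟨y, -, rfl⟩; exact dist_nonneg⟩
  have hne : ∀ (d : Quotient r), {t : ℝ | ∃ y : M, Quotient.mk r y = d ∧ t = dist x₀ y}.Nonempty := by
    intro d
    obtain ⟨y, hy⟩ := Quotient.exists_rep d
    exact ⟨dist x₀ y, y, hy, rfl⟩
  -- near minimizer in c
  have h1 : classInf r c' c < classInf r c' c + ε / 2 := by linarith
  rw [hx₀' c] at h1
  obtain ⟨t1, ⟨z, hz, rfl⟩, hlt1⟩ := exists_lt_of_csInf_lt (hne c) h1
  rw [← hx₀' c] at hlt1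
  -- near minimizer in c''
  have h2 : classInf r c' c'' < classInf r c' c'' + ε / 2 := by linarith
  rw [hx₀' c''] at h2
  obtain ⟨t2, ⟨y, hy, rfl⟩, hlt2⟩ := exists_lt_of_csInf_lt (hne c'') h2
  rw [← hx₀' c''] at hlt2
  have key : classInf r c c'' ≤ dist z y := classInf_le_dist r hz hy
  have htri : dist z y ≤ dist x₀ z + dist x₀ y := by
    rw [dist_comm x₀ z]
    exact dist_triangle z x₀ y
  have hcomm : classInf r c' c = classInf r c c' := classInf_comm r c' c
  linarith

lemma classInf_le_chain
    (H : ∀ c : Quotient r, ∃ x₀ : M, Quotient.mk r x₀ = c ∧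
        ∀ c' : Quotient r,
          classInf r c c' = sInf {t : ℝ | ∃ y : M, Quotient.mk r y = c' ∧ t = dist x₀ y}) :
    ∀ (n : ℕ) (f : Fin (n + 1) → Quotient r),
      classInf r (f 0) (f (Fin.last n)) ≤ ∑ i : Fin n, classInf r (f i.castSucc) (f i.succ) := by
  intro n
  induction n with
  | zero =>
    intro f
    simp [classInf_self]
  | succ n ih =>
    intro f
    have h2 : ∀ i : Fin n, f (Fin.succ (Fin.castSucc i)) = f (Fin.castSucc (Fin.succ i)) := by
      intro i
      congr 1
    calc classInf r (f 0) (f (Fin.last (n + 1)))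
        ≤ classInf r (f 0) (f (Fin.succ 0)) + classInf r (f (Fin.succ 0)) (f (Fin.last (n + 1))) :=
          classInf_triangle r H _ _ _
      _ ≤ classInf r (f 0) (f (Fin.succ 0)) +
            ∑ i : Fin n, classInf r (f (Fin.castSucc (Fin.succ i))) (f (Fin.succ (Fin.succ i))) := by
          apply add_le_add_right
          have h1 := ih (fun i => f i.succ)
          have hlast : Fin.succ (Fin.last n) = Fin.last (n + 1) := Fin.succ_last n
          rw [hlast] at h1
          refine le_trans h1 (le_of_eq ?_)
          exact Finset.sum_congr rfl fun i _ => by rw [h2 i]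
      _ = ∑ i : Fin (n + 1), classInf r (f i.castSucc) (f i.succ) := by
          rw [Fin.sum_univ_succ (fun i : Fin (n + 1) => classInf r (f i.castSucc) (f i.succ))]
          rw [Fin.castSucc_zero]

lemma classInf_le_quotDist
    (H : ∀ c : Quotient r, ∃ x₀ : M, Quotient.mk r x₀ = c ∧
        ∀ c' : Quotient r,
          classInf r c c' = sInf {t : ℝ | ∃ y : M, Quotient.mk r y = c' ∧ t = dist x₀ y})
    (c c' : Quotient r) : classInf r c c' ≤ quotDist r c c' := by
  rw [quotDist_eq]
  apply le_csInf (chainSet_nonempty r c c')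
  rintro t ⟨n, f, h0, hl, rfl⟩
  have := classInf_le_chain r H n f
  rwa [h0, hl] at this

end Aux

theorem quotient_pseudometric_properties {M : Type*} [MetricSpace M] (r : Setoid M) :
    ((∀ (c c' : Quotient r) (x y : M), Quotient.mk r x = c → Quotient.mk r y = c' →
        0 ≤ quotDist r c c' ∧ quotDist r c c' ≤ classInf r c c' ∧
          classInf r c c' ≤ dist x y) ∧
      (∀ c : Quotient r, quotDist r c c = 0) ∧
      (∀ c c' : Quotient r, quotDist r c c' = quotDist r c' c) ∧
      (∀ c c' c'' : Quotient r, quotDist r c c'' ≤ quotDist r c c' + quotDist r c' c'')) ∧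
    ((∀ c : Quotient r, ∃ x₀ : M, Quotient.mk r x₀ = c ∧
        ∀ c' : Quotient r,
          classInf r c c' = sInf {t : ℝ | ∃ y : M, Quotient.mk r y = c' ∧ t = dist x₀ y}) →
      (∀ c c' : Quotient r, c ≠ c' → 0 < classInf r c c') →
      (quotDist r = classInf r ∧ ∀ c c' : Quotient r, quotDist r c c' = 0 ↔ c = c')) := by
  constructor
  · refine ⟨?_, quotDist_self r, quotDist_comm r, quotDist_triangle r⟩
    intro c c' x y hx hy
    exact ⟨quotDist_nonneg r c c', quotDist_le_classInf r c c', classInf_le_dist r hx hy⟩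
  · intro H Hpos
    have heq : quotDist r = classInf r := by
      funext c c'
      exact le_antisymm (quotDist_le_classInf r c c') (classInf_le_quotDist r H c c')
    refine ⟨heq, ?_⟩
    intro c c'
    constructor
    · intro h0
      by_contra hne
      have := Hpos c c' hne
      rw [heq] at h0
      linarith
    · rintro rfl
      exact quotDist_self r c
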